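/- Let β > 0 be a constant and let p ≥ 1 be an integer such that β < p. Then there exists a constant c > 0, depending only on β and p, such that for all r > 0, all u* ∈ ℝ^p, all integers n ≥ 1, and all distinct u₁,…,uₙ in the Euclidean ball B(u*, r) ⊂ ℝ^p, one has ∫_{B(u*,r)} du / min_{1≤j≤n} |u - uⱼ|^β ≤ c · n^{β/p} · r^{p - β}. -/

import Mathlib

open MeasureTheory Set Metric ENNReal

noncomputable section

lemma two_inv_pow_eq (m : ℕ) : ((2 : ℝ)⁻¹) ^ m = (2 : ℝ) ^ (-(m : ℝ)) := by
  rw [← Real.rpow_natCast (2 : ℝ)⁻¹ m, ← Real.rpow_neg_one,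
    ← Real.rpow_mul (by norm_num : (0:ℝ) ≤ 2)]
  norm_num

lemma norm_rpow_key (p : ℕ) (hp : 1 ≤ p) (β : ℝ) (hβ : 0 < β) (h : β < p) :
    ∃ K : ℝ≥0∞, K ≠ ∞ ∧ ∀ ρ : ℝ, 0 < ρ →
      ∫⁻ x in Metric.ball (0 : EuclideanSpace ℝ (Fin p)) ρ, ENNReal.ofReal (‖x‖ ^ (-β))
        ≤ K * ENNReal.ofReal (ρ ^ ((p : ℝ) - β)) := by
  haveI : Nonempty (Fin p) := ⟨⟨0, hp⟩⟩
  haveI : Nontrivial (EuclideanSpace ℝ (Fin p)) := inferInstance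
  set V : ℝ≥0∞ := volume (ball (0 : EuclideanSpace ℝ (Fin p)) 1) with hV
  set t : ℝ := (2 : ℝ) ^ (-((p : ℝ) - β)) with ht
  have hpβ : (0 : ℝ) < (p : ℝ) - β := by linarith
  have ht0 : 0 < t := Real.rpow_pos_of_pos two_pos _
  have ht1 : t < 1 := Real.rpow_lt_one_of_one_lt_of_neg one_lt_two (by linarith)
  set q : ℝ≥0∞ := ENNReal.ofReal t with hq
  have hq1 : q < 1 := by
    rw [hq, ← ENNReal.ofReal_one]
    exact (ENNReal.ofReal_lt_ofReal_iff_of_nonneg ht0.le).2 ht1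
  have hVtop : V ≠ ∞ := measure_ball_lt_top.ne
  refine ⟨ENNReal.ofReal ((2 : ℝ) ^ (β : ℝ)) * (1 - q)⁻¹ * V, ?_, ?_⟩
  · exact ENNReal.mul_ne_top (ENNReal.mul_ne_top ENNReal.ofReal_ne_top
      (ENNReal.inv_ne_top.2 (tsub_pos_of_lt hq1).ne')) hVtop
  intro ρ hρ
  set s : ℕ → ℝ := fun k => ρ * (2 : ℝ)⁻¹ ^ k with hs
  have hs0 : ∀ k, 0 < s k := fun k => mul_pos hρ (by positivity)
  have hsmono : ∀ k, s (k + 1) ≤ s k := by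
    intro k
    have : ((2:ℝ)⁻¹) ^ (k+1) ≤ ((2:ℝ)⁻¹) ^ k :=
      pow_le_pow_of_le_one (by norm_num) (by norm_num) (Nat.le_succ k)
    exact mul_le_mul_of_nonneg_left this hρ.le
  set A : ℕ → Set (EuclideanSpace ℝ (Fin p)) := fun k => {x | s (k + 1) ≤ ‖x‖} ∩ ball 0 (s k) with hA
  have cover : ball (0 : EuclideanSpace ℝ (Fin p)) ρ \ {0} ⊆ ⋃ k, A k := by
    rintro x ⟨hx, hx0⟩
    have hxn : 0 < ‖x‖ := norm_pos_iff.2 hx0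
    have hex : ∃ k : ℕ, s (k + 1) ≤ ‖x‖ := by
      obtain ⟨m, hm⟩ := exists_pow_lt_of_lt_one (div_pos hxn hρ) (by norm_num : (2:ℝ)⁻¹ < 1)
      refine ⟨m, (hsmono m).trans ?_⟩
      rw [hs]
      calc ρ * (2:ℝ)⁻¹ ^ m ≤ ρ * (‖x‖ / ρ) := mul_le_mul_of_nonneg_left hm.le hρ.le
        _ = ‖x‖ := by field_simp
    classical
    refine mem_iUnion.2 ⟨Nat.find hex, Nat.find_spec hex, ?_⟩
    rw [mem_ball_zero_iff]
    rcases Nat.eq_zero_or_pos (Nat.find hex) with h0 | hpos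
    · rw [h0]
      simpa [hs] using (mem_ball_zero_iff.1 hx)
    · obtain ⟨m, hm⟩ : ∃ m, Nat.find hex = m + 1 := ⟨Nat.find hex - 1, by omega⟩
      have hk := Nat.find_min hex (m := m) (by omega)
      push_neg at hk
      rwa [← hm] at hk
  have hmemA : ∀ k, ∀ x ∈ A k, ENNReal.ofReal (‖x‖ ^ (-β)) ≤ ENNReal.ofReal ((s (k+1)) ^ (-β)) := by
    intro k x hx
    exact ENNReal.ofReal_le_ofReal
      (Real.rpow_le_rpow_of_nonpos (hs0 (k+1)) hx.1 (neg_nonpos.2 hβ.le))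
  have hvolA : ∀ k, volume (A k) ≤ ENNReal.ofReal ((s k) ^ p) * V := by
    intro k
    calc volume (A k) ≤ volume (ball (0 : EuclideanSpace ℝ (Fin p)) (s k)) := measure_mono inter_subset_right
      _ = ENNReal.ofReal ((s k) ^ (Module.finrank ℝ (EuclideanSpace ℝ (Fin p)))) * V := by
          rw [Measure.addHaar_ball _ _ (hs0 k).le]
      _ = ENNReal.ofReal ((s k) ^ p) * V := by
          rw [show Module.finrank ℝ (EuclideanSpace ℝ (Fin p)) = p from finrank_euclideanSpace_fin]
  -- per-term real algebra
  have hterm : ∀ k : ℕ, (s (k+1)) ^ (-β) * ((s k) ^ p) =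
      (2:ℝ) ^ (β:ℝ) * t ^ k * ρ ^ ((p:ℝ) - β) := by
    intro k
    rw [hs]
    simp only [two_inv_pow_eq]
    rw [Real.mul_rpow hρ.le (Real.rpow_nonneg (by norm_num) _),
      ← Real.rpow_natCast (ρ * (2:ℝ) ^ (-((k:ℕ):ℝ))) p,
      Real.mul_rpow hρ.le (Real.rpow_nonneg (by norm_num) _),
      ← Real.rpow_natCast t k, ht,
      ← Real.rpow_mul (by norm_num : (0:ℝ) ≤ 2),
      ← Real.rpow_mul (by norm_num : (0:ℝ) ≤ 2),
      ← Real.rpow_mul (by norm_num : (0:ℝ) ≤ 2)]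
    push_cast
    rw [show ρ ^ (-β) * (2:ℝ) ^ (-((k:ℝ)+1) * -β) * (ρ ^ ((p:ℝ)) * (2:ℝ) ^ (-(k:ℝ) * (p:ℝ)))
        = ((2:ℝ) ^ (-((k:ℝ)+1) * -β) * (2:ℝ) ^ (-(k:ℝ) * (p:ℝ))) * (ρ ^ (-β) * ρ ^ ((p:ℝ)))
        from by ring,
      ← Real.rpow_add two_pos, ← Real.rpow_add hρ,
      show (2:ℝ) ^ ((β:ℝ)) * (2:ℝ) ^ (-(↑p - β) * ↑k) * ρ ^ (↑p - β)
        = ((2:ℝ) ^ ((β:ℝ)) * (2:ℝ) ^ (-(↑p - β) * ↑k)) * ρ ^ (↑p - β) from by ring,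
      ← Real.rpow_add two_pos]
    congr 1
    · congr 1
      ring
    · congr 1
      ring
  calc ∫⁻ x in ball (0 : EuclideanSpace ℝ (Fin p)) ρ, ENNReal.ofReal (‖x‖ ^ (-β))
      = ∫⁻ x in ball (0 : EuclideanSpace ℝ (Fin p)) ρ \ {0}, ENNReal.ofReal (‖x‖ ^ (-β)) := by
        refine (setLIntegral_congr ?_).symm
        exact diff_ae_eq_self.2 (measure_mono_null inter_subset_right (measure_singleton 0))
    _ ≤ ∫⁻ x in ⋃ k, A k, ENNReal.ofReal (‖x‖ ^ (-β)) := lintegral_mono_set cover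
    _ ≤ ∑' k, ∫⁻ x in A k, ENNReal.ofReal (‖x‖ ^ (-β)) := lintegral_iUnion_le _ _
    _ ≤ ∑' k, ENNReal.ofReal ((s (k+1)) ^ (-β)) * (ENNReal.ofReal ((s k) ^ p) * V) := by
        refine ENNReal.tsum_le_tsum fun k => ?_
        calc ∫⁻ x in A k, ENNReal.ofReal (‖x‖ ^ (-β))
            ≤ ∫⁻ _ in A k, ENNReal.ofReal ((s (k+1)) ^ (-β)) :=
              setLIntegral_mono measurable_const (hmemA k)
          _ = ENNReal.ofReal ((s (k+1)) ^ (-β)) * volume (A k) := setLIntegral_const _ _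
          _ ≤ _ := mul_le_mul_right (hvolA k) _
    _ = ∑' k : ℕ, (ENNReal.ofReal ((2:ℝ) ^ (β:ℝ)) * ENNReal.ofReal (ρ ^ ((p:ℝ) - β)) * V) * q ^ k := by
        refine tsum_congr fun k => ?_
        rw [← mul_assoc, ← ENNReal.ofReal_mul (Real.rpow_nonneg (hs0 (k+1)).le _), hterm k,
          hq, ← ENNReal.ofReal_pow ht0.le,
          ENNReal.ofReal_mul (by positivity), ENNReal.ofReal_mul (by positivity)]
        ring
    _ = (ENNReal.ofReal ((2:ℝ) ^ (β:ℝ)) * ENNReal.ofReal (ρ ^ ((p:ℝ) - β)) * V) * (1 - q)⁻¹ := by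
        rw [ENNReal.tsum_mul_left, ENNReal.tsum_geometric]
    _ = ENNReal.ofReal ((2:ℝ) ^ (β:ℝ)) * (1 - q)⁻¹ * V * ENNReal.ofReal (ρ ^ ((p:ℝ) - β)) := by
        ring

lemma translate_lintegral (p : ℕ) (β ρ : ℝ) (c : EuclideanSpace ℝ (Fin p)) :
    ∫⁻ x in ball c ρ, ENNReal.ofReal (‖x - c‖ ^ (-β))
      = ∫⁻ x in ball (0 : EuclideanSpace ℝ (Fin p)) ρ, ENNReal.ofReal (‖x‖ ^ (-β)) := by
  rw [← lintegral_indicator measurableSet_ball, ← lintegral_indicator measurableSet_ball]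
  have := lintegral_sub_right_eq_self (μ := (volume : Measure (EuclideanSpace ℝ (Fin p))))
    (fun x => (ball (0 : EuclideanSpace ℝ (Fin p)) ρ).indicator
      (fun y => ENNReal.ofReal (‖y‖ ^ (-β))) x) c
  rw [← this]
  congr 1
  funext x
  by_cases hx : x ∈ ball c ρ
  · have hx' : x - c ∈ ball (0 : EuclideanSpace ℝ (Fin p)) ρ := by
      rw [mem_ball_zero_iff]; rw [mem_ball, dist_eq_norm] at hx; exact hx
    rw [indicator_of_mem hx, indicator_of_mem hx']
  · have hx' : x - c ∉ ball (0 : EuclideanSpace ℝ (Fin p)) ρ := by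
      rw [mem_ball_zero_iff]; rw [mem_ball, dist_eq_norm] at hx; exact hx
    rw [indicator_of_notMem hx, indicator_of_notMem hx']

theorem stmt_4 (β : ℝ) (p : ℕ) (hβ : 0 < β) (hp : 1 ≤ p) (h : β < (p : ℝ)) :
    ∃ c : ℝ, 0 < c ∧ ∀ r : ℝ, 0 < r →
      ∀ u₀ : EuclideanSpace ℝ (Fin p), ∀ n : ℕ, 1 ≤ n →
      ∀ u : Fin n → EuclideanSpace ℝ (Fin p), Function.Injective u →
      (∀ j, u j ∈ Metric.ball u₀ r) →
      (∫ x in Metric.ball u₀ r, 1 / (⨅ j, ‖x - u j‖ ^ β))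
        ≤ c * (n : ℝ) ^ (β / (p : ℝ)) * r ^ ((p : ℝ) - β) := by
  classical
  obtain ⟨K, hKtop, hK⟩ := norm_rpow_key p hp β hβ h
  haveI : Nonempty (Fin p) := ⟨⟨0, hp⟩⟩
  haveI : Nontrivial (EuclideanSpace ℝ (Fin p)) := inferInstance
  set V : ℝ≥0∞ := volume (ball (0 : EuclideanSpace ℝ (Fin p)) 1) with hV
  have hVtop : V ≠ ∞ := measure_ball_lt_top.ne
  refine ⟨V.toReal + K.toReal + 1, by positivity, ?_⟩
  intro r hr u₀ n hn u hu hub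
  haveI : Nonempty (Fin n) := ⟨⟨0, hn⟩⟩
  have hn0 : (0:ℝ) < n := by exact_mod_cast Nat.lt_of_lt_of_le Nat.zero_lt_one hn
  have hp0 : (0:ℝ) < p := by exact_mod_cast Nat.lt_of_lt_of_le Nat.zero_lt_one hp
  have hnp : (0:ℝ) < (n:ℝ) ^ (1/(p:ℝ)) := Real.rpow_pos_of_pos hn0 _
  set ρ : ℝ := r / (n:ℝ) ^ (1/(p:ℝ)) with hρdef
  have hρ : 0 < ρ := div_pos hr hnp
  set f : EuclideanSpace ℝ (Fin p) → ℝ := fun x => 1 / (⨅ j, ‖x - u j‖ ^ β) with hf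
  set g : EuclideanSpace ℝ (Fin p) → ℝ := fun x =>
    ρ ^ (-β) + ∑ j : Fin n, (ball (u j) ρ).indicator (fun y => ‖y - u j‖ ^ (-β)) x with hg
  have hρβ : (0:ℝ) ≤ ρ ^ (-β) := Real.rpow_nonneg hρ.le _
  have hind0 : ∀ (j : Fin n) (x : EuclideanSpace ℝ (Fin p)),
      0 ≤ (ball (u j) ρ).indicator (fun y => ‖y - u j‖ ^ (-β)) x := by
    intro j x
    exact indicator_nonneg (fun y _ => Real.rpow_nonneg (norm_nonneg _) _) x
  have hf0 : ∀ x, 0 ≤ f x := by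
    intro x
    exact one_div_nonneg.2 (Real.iInf_nonneg fun j => Real.rpow_nonneg (norm_nonneg _) _)
  have hg0 : ∀ x, 0 ≤ g x :=
    fun x => add_nonneg hρβ (Finset.sum_nonneg fun j _ => hind0 j x)
  -- pointwise domination
  have hfg : ∀ x, f x ≤ g x := by
    intro x
    obtain ⟨j0, hj0⟩ := Finite.exists_min (fun j : Fin n => ‖x - u j‖ ^ β)
    have hbdd : BddBelow (Set.range fun j : Fin n => ‖x - u j‖ ^ β) :=
      Finite.bddBelow_range _
    have hinf : (⨅ j, ‖x - u j‖ ^ β) = ‖x - u j0‖ ^ β :=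
      le_antisymm (ciInf_le hbdd j0) (le_ciInf hj0)
    by_cases hcase : ρ ≤ ‖x - u j0‖
    · have hle : ρ ^ β ≤ ‖x - u j0‖ ^ β := Real.rpow_le_rpow hρ.le hcase hβ.le
      have h1 : f x ≤ ρ ^ (-β) := by
        rw [hf]
        simp only
        rw [hinf, Real.rpow_neg hρ.le, one_div]
        exact inv_anti₀ (Real.rpow_pos_of_pos hρ β) hle
      exact h1.trans (le_add_of_nonneg_right (Finset.sum_nonneg fun j _ => hind0 j x))
    · push_neg at hcase
      rcases eq_or_lt_of_le (norm_nonneg (x - u j0)) with h0 | h0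
      · have hfx : f x = 0 := by
          rw [hf]
          simp only
          rw [hinf, ← h0, Real.zero_rpow hβ.ne']
          simp
        rw [hfx]; exact hg0 x
      · have hxj : x ∈ ball (u j0) ρ := by rw [mem_ball, dist_eq_norm]; exact hcase
        have h1 : f x = ‖x - u j0‖ ^ (-β) := by
          rw [hf]
          simp only
          rw [hinf, Real.rpow_neg (norm_nonneg _), one_div]
        rw [h1]
        calc ‖x - u j0‖ ^ (-β)
            = (ball (u j0) ρ).indicator (fun y => ‖y - u j0‖ ^ (-β)) x :=
              (indicator_of_mem hxj (fun y => ‖y - u j0‖ ^ (-β))).symm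
          _ ≤ ∑ j : Fin n, (ball (u j) ρ).indicator (fun y => ‖y - u j‖ ^ (-β)) x :=
              Finset.single_le_sum (fun j _ => hind0 j x) (Finset.mem_univ j0)
          _ ≤ g x := le_add_of_nonneg_left hρβ
  -- measurability
  have hmeasj : ∀ j : Fin n,
      Measurable fun y : EuclideanSpace ℝ (Fin p) => ‖y - u j‖ ^ (-β) :=
    by
    intro j
    refine measurable_of_continuousOn_compl_singleton (u j) ?_
    refine ContinuousOn.rpow_const ((continuous_id.sub continuous_const).norm.continuousOn) ?_
    intro y hy
    exact Or.inl (norm_ne_zero_iff.2 (sub_ne_zero.2 hy))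
  have hmeas : Measurable g := by
    refine Measurable.add measurable_const ?_
    exact Finset.measurable_sum _ fun j _ => (hmeasj j).indicator measurableSet_ball
  -- lintegral bound
  have lkey : ∫⁻ x in ball u₀ r, ENNReal.ofReal (g x) ≤
      ENNReal.ofReal (ρ ^ (-β)) * volume (ball u₀ r)
        + (n : ℝ≥0∞) * (K * ENNReal.ofReal (ρ ^ ((p:ℝ) - β))) := by
    calc ∫⁻ x in ball u₀ r, ENNReal.ofReal (g x)
        = ∫⁻ x in ball u₀ r, (ENNReal.ofReal (ρ ^ (-β)) + ∑ j : Fin n,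
            (ball (u j) ρ).indicator (fun y => ENNReal.ofReal (‖y - u j‖ ^ (-β))) x) := by
          refine lintegral_congr fun x => ?_
          rw [hg]
          simp only
          rw [ENNReal.ofReal_add hρβ (Finset.sum_nonneg fun j _ => hind0 j x),
            ENNReal.ofReal_sum_of_nonneg (fun j _ => hind0 j x)]
          congr 1
          refine Finset.sum_congr rfl fun j _ => ?_
          by_cases hx : x ∈ ball (u j) ρ
          · rw [indicator_of_mem hx, indicator_of_mem hx]
          · rw [indicator_of_notMem hx, indicator_of_notMem hx, ENNReal.ofReal_zero]
      _ = ENNReal.ofReal (ρ ^ (-β)) * volume (ball u₀ r) + ∑ j : Fin n,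
            ∫⁻ x in ball u₀ r, (ball (u j) ρ).indicator
              (fun y => ENNReal.ofReal (‖y - u j‖ ^ (-β))) x := by
          rw [lintegral_add_left measurable_const, setLIntegral_const,
            lintegral_finset_sum _ fun j _ =>
              ((hmeasj j).ennreal_ofReal).indicator measurableSet_ball]
      _ ≤ ENNReal.ofReal (ρ ^ (-β)) * volume (ball u₀ r) + ∑ _j : Fin n,
            (K * ENNReal.ofReal (ρ ^ ((p:ℝ) - β))) := by
          refine add_le_add_right (Finset.sum_le_sum fun j _ => ?_) _
          calc ∫⁻ x in ball u₀ r, (ball (u j) ρ).indicator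
                (fun y => ENNReal.ofReal (‖y - u j‖ ^ (-β))) x
              ≤ ∫⁻ x, (ball (u j) ρ).indicator
                (fun y => ENNReal.ofReal (‖y - u j‖ ^ (-β))) x :=
                setLIntegral_le_lintegral _ _
            _ = ∫⁻ x in ball (u j) ρ, ENNReal.ofReal (‖x - u j‖ ^ (-β)) :=
                lintegral_indicator measurableSet_ball _
            _ = ∫⁻ x in ball (0 : EuclideanSpace ℝ (Fin p)) ρ,
                  ENNReal.ofReal (‖x‖ ^ (-β)) := translate_lintegral p β ρ (u j)
            _ ≤ K * ENNReal.ofReal (ρ ^ ((p:ℝ) - β)) := hK ρ hρ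
      _ = _ := by
          rw [Finset.sum_const, Finset.card_univ, Fintype.card_fin, nsmul_eq_mul]
  -- integrability of g
  have hIg : Integrable g (volume.restrict (ball u₀ r)) := by
    refine ⟨hmeas.aestronglyMeasurable, ?_⟩
    rw [hasFiniteIntegral_iff_ofReal (Filter.Eventually.of_forall hg0)]
    refine lt_of_le_of_lt lkey ?_
    exact ENNReal.add_lt_top.2 ⟨ENNReal.mul_lt_top ENNReal.ofReal_lt_top measure_ball_lt_top,
      ENNReal.mul_lt_top (ENNReal.natCast_lt_top n)
        (ENNReal.mul_lt_top hKtop.lt_top ENNReal.ofReal_lt_top)⟩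
  have hle1 : (∫ x in ball u₀ r, f x) ≤ ∫ x in ball u₀ r, g x :=
    integral_mono_of_nonneg (Filter.Eventually.of_forall hf0) hIg
      (Filter.Eventually.of_forall hfg)
  have heq : (∫ x in ball u₀ r, g x)
      = (∫⁻ x in ball u₀ r, ENNReal.ofReal (g x)).toReal :=
    integral_eq_lintegral_of_nonneg_ae (Filter.Eventually.of_forall hg0)
      hmeas.aestronglyMeasurable
  -- real exponent algebra
  have e1 : ρ ^ (-β) * r ^ (p : ℕ) = (n:ℝ) ^ (β/(p:ℝ)) * r ^ ((p:ℝ) - β) := by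
    rw [hρdef, Real.div_rpow hr.le hnp.le, ← Real.rpow_natCast r p,
      ← Real.rpow_mul hn0.le, div_mul_eq_mul_div, ← Real.rpow_add hr,
      div_eq_mul_inv, ← Real.rpow_neg hn0.le,
      show -β + (p:ℝ) = (p:ℝ) - β from by ring,
      show -(1/(p:ℝ) * -β) = β/(p:ℝ) from by ring]
    exact mul_comm _ _
  have e2 : (n:ℝ) * ρ ^ ((p:ℝ) - β) = (n:ℝ) ^ (β/(p:ℝ)) * r ^ ((p:ℝ) - β) := by
    rw [hρdef, Real.div_rpow hr.le hnp.le, ← Real.rpow_mul hn0.le, div_eq_mul_inv,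
      ← Real.rpow_neg hn0.le, mul_comm (r ^ ((p:ℝ) - β)), ← mul_assoc]
    nth_rewrite 1 [← Real.rpow_one (n:ℝ)]
    rw [← Real.rpow_add hn0,
      show 1 + -(1/(p:ℝ) * ((p:ℝ) - β)) = β/(p:ℝ) from by field_simp; ring]
  -- final ENNReal bound
  have hfinal : ENNReal.ofReal (ρ ^ (-β)) * volume (ball u₀ r)
      + (n : ℝ≥0∞) * (K * ENNReal.ofReal (ρ ^ ((p:ℝ) - β)))
      ≤ ENNReal.ofReal ((V.toReal + K.toReal + 1) * (n:ℝ) ^ (β/(p:ℝ)) * r ^ ((p:ℝ) - β)) := by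
    have hvol : volume (ball u₀ r) = ENNReal.ofReal (r ^ (p:ℕ) * V.toReal) := by
      rw [Measure.addHaar_ball _ _ hr.le,
        show Module.finrank ℝ (EuclideanSpace ℝ (Fin p)) = p from finrank_euclideanSpace_fin,
        ← hV, ENNReal.ofReal_mul (by positivity), ENNReal.ofReal_toReal hVtop]
    have hKr : K = ENNReal.ofReal K.toReal := (ENNReal.ofReal_toReal hKtop).symm
    rw [hvol]
    nth_rewrite 1 [hKr]
    rw [← ENNReal.ofReal_natCast n, ← ENNReal.ofReal_mul hρβ,
      ← ENNReal.ofReal_mul (ENNReal.toReal_nonneg), ← ENNReal.ofReal_mul (Nat.cast_nonneg n),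
      ← ENNReal.ofReal_add (by positivity) (by positivity)]
    refine ENNReal.ofReal_le_ofReal ?_
    have hX : (0:ℝ) ≤ (n:ℝ) ^ (β/(p:ℝ)) * r ^ ((p:ℝ) - β) := by positivity
    calc ρ ^ (-β) * (r ^ (p:ℕ) * V.toReal) + (n:ℝ) * (K.toReal * ρ ^ ((p:ℝ) - β))
        = V.toReal * (ρ ^ (-β) * r ^ (p:ℕ)) + K.toReal * ((n:ℝ) * ρ ^ ((p:ℝ) - β)) := by
          ring
      _ = (V.toReal + K.toReal) * ((n:ℝ) ^ (β/(p:ℝ)) * r ^ ((p:ℝ) - β)) := by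
          rw [e1, e2]; ring
      _ ≤ (V.toReal + K.toReal + 1) * ((n:ℝ) ^ (β/(p:ℝ)) * r ^ ((p:ℝ) - β)) := by
          refine mul_le_mul_of_nonneg_right (by linarith) hX
      _ = (V.toReal + K.toReal + 1) * (n:ℝ) ^ (β/(p:ℝ)) * r ^ ((p:ℝ) - β) := by ring
  -- conclude
  refine hle1.trans ?_
  rw [heq]
  refine ENNReal.toReal_le_of_le_ofReal (by positivity) (lkey.trans hfinal)
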